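/- arXiv:2402.08821 — 2 statements merged into one kernel-verified Lean document; each statement's English description precedes it below -/
import Mathlib

section
/- One-step consensus contraction under normalized updates: let X ∈ ℝ^{d×n}, let Ẑ ∈ ℝ^{d×n} be any matrix whose columns each have Euclidean norm at most 1, let W ∈ ℝ^{n×n} be symmetric with W𝟙 = 𝟙 and ‖W − (1/n)𝟙𝟙ᵀ‖₂ ≤ ρ < 1, and let η ≥ 0. Then for X⁺ := (X − ηẐ)W one has (1/n)·‖X⁺ − X̄⁺‖² ≤ ((1+ρ)/2)·(1/n)·‖X − X̄‖² + ((1+ρ²)/(1−ρ²))·η². -/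
open Finset

lemma key_ineq (ρ a b : ℝ) (hρ0 : 0 ≤ ρ) (hρ1 : ρ < 1) (ha : 0 ≤ a) (hb : 0 ≤ b) :
    ρ^2 * (a + b)^2 ≤ ((1 + ρ)/2) * a^2 + ((1 + ρ^2)/(1 - ρ^2)) * b^2 := by
  have h1 : 0 < 1 - ρ^2 := by nlinarith
  have hc : (1 + ρ^2)/(1 - ρ^2) * (1 - ρ^2) = 1 + ρ^2 := div_mul_cancel₀ _ h1.ne'
  have H2 : (ρ^2*(a+b)^2) * (1-ρ^2)
      ≤ ((1 + ρ)/2 * a^2 + (1 + ρ^2)/(1 - ρ^2) * b^2) * (1-ρ^2) := by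
    nlinarith [sq_nonneg ((1 - ρ^2)*a - 2*ρ^2*b),
      mul_nonneg (mul_nonneg (mul_nonneg hρ0 (sub_nonneg.2 hρ1.le)) (sq_nonneg a)) h1.le,
      mul_nonneg (sq_nonneg b) h1.le, mul_nonneg (sq_nonneg (ρ*b)) h1.le,
      mul_nonneg ha hb]
  exact le_of_mul_le_mul_right H2 h1

lemma var_le {E : Type*} [NormedAddCommGroup E] [InnerProductSpace ℝ E]
    {n : ℕ} (hn : 0 < n) (z : Fin n → E) :
    ∑ j, ‖z j - (n:ℝ)⁻¹ • ∑ k, z k‖^2 ≤ ∑ j, ‖z j‖^2 := by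
  set m : E := (n:ℝ)⁻¹ • ∑ k, z k with hm
  have hsum : ∑ k, z k = (n:ℝ) • m := by
    rw [hm, smul_smul, mul_inv_cancel₀ (by positivity : (n:ℝ) ≠ 0), one_smul]
  calc ∑ j, ‖z j - m‖^2 = ∑ j, (‖z j‖^2 - 2 * inner ℝ (z j) m + ‖m‖^2) := by
        simp_rw [fun j => norm_sub_sq_real (z j) m]
    _ = ∑ j, ‖z j‖^2 - 2 * inner ℝ (∑ j, z j) m + (n:ℝ) * ‖m‖^2 := by
        rw [sum_inner, Finset.mul_sum, Finset.sum_add_distrib, Finset.sum_sub_distrib,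
          Finset.sum_const, card_univ, Fintype.card_fin, nsmul_eq_mul]
    _ ≤ ∑ j, ‖z j‖^2 := by
        rw [hsum, real_inner_smul_left, real_inner_self_eq_norm_sq]
        nlinarith [sq_nonneg ‖m‖, Nat.cast_nonneg (α := ℝ) n]

lemma eucl_sum_apply {ι : Type*} (s : Finset ι) {d : ℕ} (f : ι → EuclideanSpace ℝ (Fin d)) (c : Fin d) :
    (∑ k ∈ s, f k) c = ∑ k ∈ s, f k c := by
  classical
  induction s using Finset.induction with
  | empty => rfl
  | @insert _ _ h ih => rw [Finset.sum_insert h, Finset.sum_insert h, PiLp.add_apply, ih]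

lemma norm_sq_eucl {d : ℕ} (v : EuclideanSpace ℝ (Fin d)) : ‖v‖^2 = ∑ c, (v c)^2 := by
  rw [EuclideanSpace.norm_eq, Real.sq_sqrt (by positivity)]
  simp [Real.norm_eq_abs, sq_abs]

lemma spec_step {d n : ℕ} (hn : 0 < n) (W : Matrix (Fin n) (Fin n) ℝ)
    (hWrow : ∀ i, ∑ j, W i j = 1) (ρ : ℝ)
    (hspec : ∀ a : EuclideanSpace ℝ (Fin n),
      ‖(show EuclideanSpace ℝ (Fin n) from
          WithLp.toLp 2 (fun i => (∑ j, W i j * a j) - (∑ j, a j) / n))‖ ≤ ρ * ‖a‖)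
    (Y : Fin n → EuclideanSpace ℝ (Fin d)) :
    ∑ i, ‖(∑ j, W i j • Y j) - (n:ℝ)⁻¹ • ∑ k, Y k‖^2
      ≤ ρ^2 * ∑ j, ‖Y j - (n:ℝ)⁻¹ • ∑ k, Y k‖^2 := by
  set m : EuclideanSpace ℝ (Fin d) := (n:ℝ)⁻¹ • ∑ k, Y k with hm
  have hmc : ∀ c, m c = (n:ℝ)⁻¹ * ∑ k, Y k c := by
    intro c
    rw [hm, PiLp.smul_apply, eucl_sum_apply, smul_eq_mul]
  have happ : ∀ i c, (∑ j, W i j • Y j) c = ∑ j, W i j * Y j c := by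
    intro i c
    rw [eucl_sum_apply]
    simp
  have key : ∀ c : Fin d, ∑ i, ((∑ j, W i j • Y j) c - m c)^2
      ≤ ρ^2 * ∑ j, (Y j c - m c)^2 := by
    intro c
    set a : EuclideanSpace ℝ (Fin n) := WithLp.toLp 2 (fun j => Y j c - m c) with hadef
    have h := hspec a
    have hsum0 : (∑ j, a j) = 0 := by
      simp only [hadef, WithLp.ofLp_toLp, Finset.sum_sub_distrib, Finset.sum_const, card_univ,
        Fintype.card_fin, nsmul_eq_mul, hmc c]
      field_simp
      simp
    have hv : ∀ i, (∑ j, W i j * a j) - (∑ j, a j) / n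
        = (∑ j, W i j • Y j) c - m c := by
      intro i
      rw [hsum0, happ i c]
      simp only [hadef, WithLp.ofLp_toLp, mul_sub, Finset.sum_sub_distrib, ← Finset.sum_mul, hWrow i]
      ring
    have hsq : ‖(show EuclideanSpace ℝ (Fin n) from
          WithLp.toLp 2 (fun i => (∑ j, W i j * a j) - (∑ j, a j) / n))‖^2 ≤ ρ^2 * ‖a‖^2 := by
      calc _ ≤ (ρ * ‖a‖)^2 := by
            apply pow_le_pow_left₀ (norm_nonneg _) h
        _ = ρ^2 * ‖a‖^2 := by ring
    rw [norm_sq_eucl, norm_sq_eucl] at hsq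
    simp only [WithLp.ofLp_toLp] at hsq
    simp_rw [hv] at hsq
    simp only [hadef, WithLp.ofLp_toLp] at hsq
    exact hsq
  calc ∑ i, ‖(∑ j, W i j • Y j) - m‖^2
      = ∑ i, ∑ c, ((∑ j, W i j • Y j) c - m c)^2 := by
        simp_rw [norm_sq_eucl, PiLp.sub_apply]
    _ = ∑ c, ∑ i, ((∑ j, W i j • Y j) c - m c)^2 := Finset.sum_comm
    _ ≤ ∑ c, ρ^2 * ∑ j, (Y j c - m c)^2 := Finset.sum_le_sum (fun c _ => key c)
    _ = ρ^2 * ∑ j, ‖Y j - m‖^2 := by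
        rw [← Finset.mul_sum, Finset.sum_comm]
        simp_rw [norm_sq_eucl, PiLp.sub_apply]

/-- **One-step consensus contraction under normalized updates.** With columns of `Ẑ`
of norm at most `1` and `X⁺ := (X − ηẐ)W`,
`(1/n)‖X⁺ − X̄⁺‖² ≤ ((1+ρ)/2)(1/n)‖X − X̄‖² + ((1+ρ²)/(1−ρ²))η²`,
squared Frobenius norms being sums of squared column deviations. -/
theorem normalized_one_step_consensus
    (d n : ℕ) (hn : 0 < n)
    (W : Matrix (Fin n) (Fin n) ℝ) (hWsymm : W.IsSymm)
    (hWrow : ∀ i, ∑ j, W i j = 1)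
    (ρ : ℝ) (hρ1 : ρ < 1)
    (hspec : ∀ a : EuclideanSpace ℝ (Fin n),
      ‖(show EuclideanSpace ℝ (Fin n) from
          WithLp.toLp 2 (fun i => (∑ j, W i j * a j) - (∑ j, a j) / n))‖ ≤ ρ * ‖a‖)
    (X Zhat : Fin n → EuclideanSpace ℝ (Fin d)) (hZhat : ∀ i, ‖Zhat i‖ ≤ 1)
    (η : ℝ) (hη : 0 ≤ η) :
    (1 / (n : ℝ)) * ∑ i, ‖(∑ j, W i j • (X j - η • Zhat j))
        - (n : ℝ)⁻¹ • ∑ k, ∑ j, W k j • (X j - η • Zhat j)‖ ^ 2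
      ≤ ((1 + ρ) / 2) * ((1 / (n : ℝ)) * ∑ i, ‖X i - (n : ℝ)⁻¹ • ∑ j, X j‖ ^ 2)
        + ((1 + ρ ^ 2) / (1 - ρ ^ 2)) * η ^ 2 := by
  have hn0 : (0:ℝ) < n := by exact_mod_cast hn
  -- ρ ≥ 0
  have hρ0 : 0 ≤ ρ := by
    set one : EuclideanSpace ℝ (Fin n) := WithLp.toLp 2 (fun _ => (1:ℝ)) with hone
    have h : (0:ℝ) ≤ ρ * ‖one‖ := le_trans (norm_nonneg _) (hspec one)
    have hne : one ≠ 0 := by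
      intro hc
      have := congrArg (fun v : EuclideanSpace ℝ (Fin n) => v ⟨0, hn⟩) hc
      simp [hone] at this
    have hpos : 0 < ‖one‖ := norm_pos_iff.2 hne
    by_contra h'
    push_neg at h'
    nlinarith
  have h1ρ : 0 < 1 - ρ^2 := by nlinarith
  set Y : Fin n → EuclideanSpace ℝ (Fin d) := fun j => X j - η • Zhat j with hY
  -- column sums equal 1
  have hcol : ∀ j, ∑ k, W k j = 1 := by
    intro j
    have : ∀ k, W k j = W j k := fun k => by
      conv_lhs => rw [← hWsymm]
      rfl
    simp_rw [this]
    exact hWrow j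
  have hmean : ∑ k, ∑ j, W k j • Y j = ∑ j, Y j := by
    rw [Finset.sum_comm]
    have : ∀ j, ∑ k, W k j • Y j = Y j := fun j => by
      rw [← Finset.sum_smul, hcol j, one_smul]
    simp_rw [this]
  set m : EuclideanSpace ℝ (Fin d) := (n:ℝ)⁻¹ • ∑ k, Y k with hm
  set mX : EuclideanSpace ℝ (Fin d) := (n:ℝ)⁻¹ • ∑ k, X k with hmX
  set mZ : EuclideanSpace ℝ (Fin d) := (n:ℝ)⁻¹ • ∑ k, Zhat k with hmZ
  have hmdecomp : m = mX - η • mZ := by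
    rw [hm, hmX, hmZ, hY]
    rw [Finset.sum_sub_distrib, smul_sub, ← Finset.smul_sum, smul_comm]
  -- step 1: spectral contraction
  have step1 : ∑ i, ‖(∑ j, W i j • Y j) - m‖^2 ≤ ρ^2 * ∑ j, ‖Y j - m‖^2 :=
    spec_step hn W hWrow ρ hspec Y
  -- step 2: per-column bound
  have step2 : ∀ j, ρ^2 * ‖Y j - m‖^2
      ≤ ((1 + ρ)/2) * ‖X j - mX‖^2 + ((1 + ρ^2)/(1 - ρ^2)) * (η^2 * ‖Zhat j - mZ‖^2) := by
    intro j
    have hsplit : Y j - m = (X j - mX) - η • (Zhat j - mZ) := by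
      rw [hY, hmdecomp, smul_sub]
      exact sub_sub_sub_comm _ _ _ _
    have hnorm : ‖Y j - m‖ ≤ ‖X j - mX‖ + η * ‖Zhat j - mZ‖ := by
      rw [hsplit]
      calc ‖(X j - mX) - η • (Zhat j - mZ)‖ ≤ ‖X j - mX‖ + ‖η • (Zhat j - mZ)‖ :=
            norm_sub_le _ _
        _ = ‖X j - mX‖ + η * ‖Zhat j - mZ‖ := by
            rw [norm_smul, Real.norm_eq_abs, abs_of_nonneg hη]
    have h2 := key_ineq ρ ‖X j - mX‖ (η * ‖Zhat j - mZ‖) hρ0 hρ1 (norm_nonneg _)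
      (by positivity)
    have h3 : ρ^2 * ‖Y j - m‖^2 ≤ ρ^2 * (‖X j - mX‖ + η * ‖Zhat j - mZ‖)^2 :=
      mul_le_mul_of_nonneg_left (pow_le_pow_left₀ (norm_nonneg _) hnorm 2) (sq_nonneg ρ)
    calc ρ^2 * ‖Y j - m‖^2 ≤ ρ^2 * (‖X j - mX‖ + η * ‖Zhat j - mZ‖)^2 := h3
      _ ≤ ((1 + ρ)/2) * ‖X j - mX‖^2 + ((1 + ρ^2)/(1 - ρ^2)) * (η * ‖Zhat j - mZ‖)^2 := h2
      _ = ((1 + ρ)/2) * ‖X j - mX‖^2 + ((1 + ρ^2)/(1 - ρ^2)) * (η^2 * ‖Zhat j - mZ‖^2) := by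
          ring
  -- step 3: Z deviation bound
  have step3 : ∑ j, ‖Zhat j - mZ‖^2 ≤ (n:ℝ) := by
    calc ∑ j, ‖Zhat j - mZ‖^2 ≤ ∑ j, ‖Zhat j‖^2 := var_le hn Zhat
      _ ≤ ∑ _j : Fin n, (1:ℝ) := Finset.sum_le_sum (fun j _ => by
          have := hZhat j
          nlinarith [norm_nonneg (Zhat j)])
      _ = (n:ℝ) := by simp
  -- combine
  have hCnn : 0 ≤ (1 + ρ^2)/(1 - ρ^2) := by positivity
  have total : ∑ i, ‖(∑ j, W i j • Y j) - m‖^2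
      ≤ ((1 + ρ)/2) * ∑ j, ‖X j - mX‖^2 + ((1 + ρ^2)/(1 - ρ^2)) * η^2 * (n:ℝ) := by
    calc ∑ i, ‖(∑ j, W i j • Y j) - m‖^2 ≤ ρ^2 * ∑ j, ‖Y j - m‖^2 := step1
      _ = ∑ j, ρ^2 * ‖Y j - m‖^2 := Finset.mul_sum _ _ _
      _ ≤ ∑ j, (((1 + ρ)/2) * ‖X j - mX‖^2
            + ((1 + ρ^2)/(1 - ρ^2)) * (η^2 * ‖Zhat j - mZ‖^2)) :=
          Finset.sum_le_sum (fun j _ => step2 j)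
      _ = ((1 + ρ)/2) * ∑ j, ‖X j - mX‖^2
            + ((1 + ρ^2)/(1 - ρ^2)) * η^2 * ∑ j, ‖Zhat j - mZ‖^2 := by
          rw [Finset.sum_add_distrib, ← Finset.mul_sum, ← Finset.mul_sum]
          congr 1
          rw [← Finset.mul_sum, mul_assoc]
      _ ≤ ((1 + ρ)/2) * ∑ j, ‖X j - mX‖^2 + ((1 + ρ^2)/(1 - ρ^2)) * η^2 * (n:ℝ) := by
          have : 0 ≤ ((1 + ρ^2)/(1 - ρ^2)) * η^2 := by positivity
          nlinarith [step3]
  -- finish: multiply by 1/n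
  rw [hmean]
  have hfin : (1 / (n:ℝ)) * ∑ i, ‖(∑ j, W i j • Y j) - m‖^2
      ≤ (1 / (n:ℝ)) * (((1 + ρ)/2) * ∑ j, ‖X j - mX‖^2
          + ((1 + ρ^2)/(1 - ρ^2)) * η^2 * (n:ℝ)) :=
    mul_le_mul_of_nonneg_left total (by positivity)
  calc (1 / (n:ℝ)) * ∑ i, ‖(∑ j, W i j • Y j) - m‖^2
      ≤ (1 / (n:ℝ)) * (((1 + ρ)/2) * ∑ j, ‖X j - mX‖^2
          + ((1 + ρ^2)/(1 - ρ^2)) * η^2 * (n:ℝ)) := hfin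
    _ = ((1 + ρ)/2) * ((1 / (n:ℝ)) * ∑ j, ‖X j - mX‖^2)
          + ((1 + ρ^2)/(1 - ρ^2)) * η^2 := by
        field_simp
end

section
/- Cumulative consensus error of normalized iterates (pathwise): let W ∈ ℝ^{n×n} be symmetric with W𝟙 = 𝟙 and ‖W − (1/n)𝟙𝟙ᵀ‖₂ ≤ ρ < 1. Suppose the sequence (X^t)_{t≥0} ⊂ ℝ^{d×n} satisfies X^{t+1} = (X^t − η_t Ẑ^t)W for some η_t ≥ 0 and matrices Ẑ^t ∈ ℝ^{d×n} whose columns each have norm at most 1, with all columns of X^0 equal. Then (i) for every T ≥ 1, ∑_{t=0}^{T-1} (1/n)·‖X^t − X̄^t‖² ≤ ρ̃·∑_{t=0}^{T-1} η_t²; and (ii) if (α_t)_{t≥0} is nonincreasing with values in [0,1], then for every t ≥ 0, ∑_{τ=0}^{t} α_τ·√( (1/n)·‖X^τ − X̄^τ‖² ) ≤ ρ̃·∑_{τ=0}^{t} α_τ·η_τ. -/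
open Finset

/-- The network constant `ρ̃ := max{ (1 − √((1+ρ)/2))⁻¹·√((1+ρ²)/(1−ρ²)),
(2/(1−ρ))·((1+ρ²)/(1−ρ²)) }`. -/
noncomputable def rhoTilde (ρ : ℝ) : ℝ :=
  max ((1 - Real.sqrt ((1 + ρ) / 2))⁻¹ * Real.sqrt ((1 + ρ ^ 2) / (1 - ρ ^ 2)))
    ((2 / (1 - ρ)) * ((1 + ρ ^ 2) / (1 - ρ ^ 2)))

private lemma eucl_norm_sq {k : ℕ} (x : EuclideanSpace ℝ (Fin k)) :
    ‖x‖ ^ 2 = ∑ i, x i ^ 2 := by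
  rw [EuclideanSpace.norm_eq, Real.sq_sqrt (by positivity)]
  simp [sq_abs]

private lemma aux_sq (ρ : ℝ) (hρ0 : 0 ≤ ρ) (hρ1 : ρ < 1) (e η : ℕ → ℝ)
    (he0 : e 0 = 0) (hen : ∀ t, 0 ≤ e t) (hηn : ∀ t, 0 ≤ η t)
    (hrec : ∀ t, e (t + 1) ≤ ρ * (e t + η t)) :
    ∀ T : ℕ, ∑ t ∈ Finset.range T, e t ^ 2 ≤ rhoTilde ρ * ∑ t ∈ Finset.range T, η t ^ 2 := by
  have h1ρ : 0 < 1 - ρ := by linarith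
  have h1p : 0 < 1 + ρ := by linarith
  have h12 : 0 < 1 + 2 * ρ := by linarith
  have claim : ∀ T : ℕ, (1 - ρ) ^ 2 * (1 + 2 * ρ) * ∑ t ∈ Finset.range T, e t ^ 2
      + (1 + ρ) * (1 - ρ) * e T ^ 2 ≤ 2 * ρ ^ 2 * (1 + ρ) * ∑ t ∈ Finset.range T, η t ^ 2 := by
    intro T
    induction T with
    | zero => simp [he0]
    | succ T ih =>
      rw [Finset.sum_range_succ, Finset.sum_range_succ]
      have hsq : e (T + 1) ^ 2 ≤ ρ ^ 2 * (e T + η T) ^ 2 := by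
        nlinarith [hrec T, hen (T + 1), hen T, hηn T]
      have hsq' := mul_le_mul_of_nonneg_left hsq
        (by positivity : (0:ℝ) ≤ (1 + ρ) * (1 - ρ))
      nlinarith [ih, hsq', mul_nonneg (sq_nonneg ρ) (sq_nonneg ((1 - ρ) * e T - (1 + ρ) * η T))]
  intro T
  have hQ : (0:ℝ) ≤ ∑ t ∈ Finset.range T, η t ^ 2 := by positivity
  have hden : (0:ℝ) < (1 - ρ) ^ 2 * (1 + 2 * ρ) := by positivity
  have hc : 2 * ρ ^ 2 * (1 + ρ) / ((1 - ρ) ^ 2 * (1 + 2 * ρ)) ≤ rhoTilde ρ := by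
    refine le_trans ?_ (le_max_right _ _)
    rw [div_mul_div_comm, div_le_div_iff₀ hden (by nlinarith : (0:ℝ) < (1 - ρ) * (1 - ρ ^ 2))]
    have hρ4 : ρ ^ 4 ≤ 1 := pow_le_one₀ hρ0 hρ1.le
    nlinarith [mul_nonneg (sq_nonneg (1 - ρ)) (by nlinarith : (0:ℝ) ≤ 1 + 2 * ρ - ρ ^ 4)]
  have h1 : (∑ t ∈ Finset.range T, e t ^ 2) * ((1 - ρ) ^ 2 * (1 + 2 * ρ))
      ≤ 2 * ρ ^ 2 * (1 + ρ) * ∑ t ∈ Finset.range T, η t ^ 2 := by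
    nlinarith [claim T, mul_nonneg (mul_nonneg h1p.le h1ρ.le) (sq_nonneg (e T))]
  have h2 : ∑ t ∈ Finset.range T, e t ^ 2
      ≤ 2 * ρ ^ 2 * (1 + ρ) / ((1 - ρ) ^ 2 * (1 + 2 * ρ)) * ∑ t ∈ Finset.range T, η t ^ 2 := by
    rw [div_mul_eq_mul_div, le_div_iff₀ hden]
    linarith [h1]
  exact h2.trans (mul_le_mul_of_nonneg_right hc hQ)

private lemma aux_lin (ρ : ℝ) (hρ0 : 0 ≤ ρ) (hρ1 : ρ < 1) (e η α : ℕ → ℝ)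
    (he0 : e 0 = 0) (hen : ∀ t, 0 ≤ e t) (hηn : ∀ t, 0 ≤ η t)
    (hαn : ∀ t, 0 ≤ α t) (hαd : ∀ t, α (t + 1) ≤ α t)
    (hrec : ∀ t, e (t + 1) ≤ ρ * (e t + η t)) :
    ∀ T : ℕ, ∑ τ ∈ Finset.range T, α τ * e τ
      ≤ rhoTilde ρ * ∑ τ ∈ Finset.range T, α τ * η τ := by
  have h1ρ : 0 < 1 - ρ := by linarith
  have h1p : 0 < 1 + ρ := by linarith
  have claim : ∀ T : ℕ, (1 - ρ) * ∑ τ ∈ Finset.range T, α τ * e τ + α T * e T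
      ≤ ρ * ∑ τ ∈ Finset.range T, α τ * η τ := by
    intro T
    induction T with
    | zero => simp [he0]
    | succ T ih =>
      rw [Finset.sum_range_succ, Finset.sum_range_succ]
      have hstep : α (T + 1) * e (T + 1) ≤ α T * (ρ * (e T + η T)) :=
        (mul_le_mul_of_nonneg_right (hαd T) (hen (T + 1))).trans
          (mul_le_mul_of_nonneg_left (hrec T) (hαn T))
      nlinarith [ih, hstep]
  intro T
  have hQ : (0:ℝ) ≤ ∑ τ ∈ Finset.range T, α τ * η τ :=
    Finset.sum_nonneg fun τ _ => mul_nonneg (hαn τ) (hηn τ)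
  have hc : ρ / (1 - ρ) ≤ rhoTilde ρ := by
    refine le_trans ?_ (le_max_right _ _)
    rw [div_mul_div_comm, div_le_div_iff₀ h1ρ
      (by nlinarith [mul_pos (mul_pos h1ρ h1ρ) h1p] : (0:ℝ) < (1 - ρ) * (1 - ρ ^ 2))]
    nlinarith [mul_nonneg hρ0 (sq_nonneg ρ), sq_nonneg ρ, mul_nonneg hρ0 hρ0]
  have h2 : ∑ τ ∈ Finset.range T, α τ * e τ
      ≤ ρ / (1 - ρ) * ∑ τ ∈ Finset.range T, α τ * η τ := by
    rw [div_mul_eq_mul_div, le_div_iff₀ h1ρ]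
    nlinarith [claim T, mul_nonneg (hαn T) (hen T)]
  exact h2.trans (mul_le_mul_of_nonneg_right hc hQ)

/-- **Cumulative consensus error of normalized iterates (pathwise).** For iterates
`X^{t+1} = (X^t − η_t Ẑ^t)W` with unit-norm-bounded columns of `Ẑ^t` and all columns
of `X⁰` equal: (i) `∑_{t<T} (1/n)‖X^t − X̄^t‖² ≤ ρ̃ ∑_{t<T} η_t²`; (ii) for any
nonincreasing `α_t ∈ [0,1]` and every `t`,
`∑_{τ≤t} α_τ √((1/n)‖X^τ − X̄^τ‖²) ≤ ρ̃ ∑_{τ≤t} α_τ η_τ`. -/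
theorem cumulative_consensus_error_normalized
    (d n : ℕ) (hn : 0 < n)
    (W : Matrix (Fin n) (Fin n) ℝ) (hWsymm : W.IsSymm)
    (hWrow : ∀ i, ∑ j, W i j = 1)
    (ρ : ℝ) (hρ1 : ρ < 1)
    (hspec : ∀ a : EuclideanSpace ℝ (Fin n),
      ‖(show EuclideanSpace ℝ (Fin n) from
          WithLp.toLp 2 (fun i => (∑ j, W i j * a j) - (∑ j, a j) / n))‖ ≤ ρ * ‖a‖)
    (X Zhat : ℕ → Fin n → EuclideanSpace ℝ (Fin d)) (ηt : ℕ → ℝ)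
    (hη : ∀ t, 0 ≤ ηt t) (hZhat : ∀ t i, ‖Zhat t i‖ ≤ 1)
    (hX : ∀ t i, X (t + 1) i = ∑ j, W i j • (X t j - ηt t • Zhat t j))
    (hX0 : ∀ i j, X 0 i = X 0 j) :
    (∀ T : ℕ, 1 ≤ T →
      ∑ t ∈ Finset.range T, (1 / (n : ℝ)) * ∑ i, ‖X t i - (n : ℝ)⁻¹ • ∑ j, X t j‖ ^ 2
        ≤ rhoTilde ρ * ∑ t ∈ Finset.range T, ηt t ^ 2)
    ∧ (∀ αt : ℕ → ℝ, (∀ t, 0 ≤ αt t) → (∀ t, αt t ≤ 1) → (∀ t, αt (t + 1) ≤ αt t) →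
        ∀ t : ℕ,
        ∑ τ ∈ Finset.range (t + 1), αt τ *
            Real.sqrt ((1 / (n : ℝ)) * ∑ i, ‖X τ i - (n : ℝ)⁻¹ • ∑ j, X τ j‖ ^ 2)
          ≤ rhoTilde ρ * ∑ τ ∈ Finset.range (t + 1), αt τ * ηt τ) := by
  have hn' : (0:ℝ) < n := by exact_mod_cast hn
  have hn0 : (n:ℝ) ≠ 0 := ne_of_gt hn'
  -- ρ ≥ 0
  have hρ0 : 0 ≤ ρ := by
    set v : EuclideanSpace ℝ (Fin n) := WithLp.toLp 2 (fun _ => (1:ℝ)) with hv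
    have h := hspec v
    have hz : (show EuclideanSpace ℝ (Fin n) from
        WithLp.toLp 2 (fun i => (∑ j, W i j * v j) - (∑ j, v j) / n)) = 0 := by
      ext i
      show (∑ j, W i j * v j) - (∑ j, v j) / n = 0
      simp only [hv, PiLp.toLp_apply, mul_one]
      rw [hWrow i, Finset.sum_const, Finset.card_univ, Fintype.card_fin, nsmul_eq_mul, mul_one]
      field_simp
      norm_num
    rw [hz, norm_zero] at h
    have hvn : (0:ℝ) < ‖v‖ := by
      refine norm_pos_iff.mpr ?_
      rw [hv]
      intro hc
      have := congrArg (fun w : EuclideanSpace ℝ (Fin n) => w ⟨0, hn⟩) hc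
      simpa using this
    nlinarith [h, hvn]
  -- nonnegativity of the normalized consensus error
  have hFnn : ∀ t, (0:ℝ) ≤ (1 / (n : ℝ)) * ∑ i, ‖X t i - (n : ℝ)⁻¹ • ∑ j, X t j‖ ^ 2 :=
    fun t => by positivity
  set e : ℕ → ℝ := fun t =>
    Real.sqrt ((1 / (n : ℝ)) * ∑ i, ‖X t i - (n : ℝ)⁻¹ • ∑ j, X t j‖ ^ 2) with he_def
  have hen : ∀ t, 0 ≤ e t := fun t => Real.sqrt_nonneg _
  -- e 0 = 0
  have he0 : e 0 = 0 := by
    have hz : ∀ i, X 0 i - (n : ℝ)⁻¹ • ∑ j, X 0 j = 0 := by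
      intro i
      have h1 : ∑ j, X 0 j = (n:ℕ) • X 0 i := by
        have hc : ∀ j : Fin n, X 0 j = X 0 i := fun j => hX0 j i
        simp [hc]
      rw [h1, ← Nat.cast_smul_eq_nsmul ℝ, smul_smul, inv_mul_cancel₀ hn0, one_smul, sub_self]
    rw [he_def]
    simp [hz]
  -- column sums of W are 1
  have hcol : ∀ j, ∑ i, W i j = 1 := by
    intro j
    rw [Finset.sum_congr rfl fun i _ => hWsymm.apply j i]
    exact hWrow j
  -- coordinatewise form of the update
  have hXapp : ∀ t i (k : Fin d),
      X (t + 1) i k = ∑ j, W i j * (X t j k - ηt t * Zhat t j k) := by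
    intro t i k
    rw [hX t i]
    rw [show ((∑ j, W i j • (X t j - ηt t • Zhat t j)) k)
        = ∑ j, (W i j • (X t j - ηt t • Zhat t j)) k from by
          rw [WithLp.ofLp_sum]; exact Finset.sum_apply k _ _]
    refine Finset.sum_congr rfl fun j _ => ?_
    simp
  -- the key recursion : e (t+1) ≤ ρ * (e t + ηt t)
  have hrec : ∀ t, e (t + 1) ≤ ρ * (e t + ηt t) := by
    intro t
    -- mean at time t+1, coordinatewise
    have hmean : ∀ k : Fin d, ((n : ℝ)⁻¹ • ∑ j, X (t + 1) j) k
        = (∑ j, (X t j k - ηt t * Zhat t j k)) / n := by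
      intro k
      have hap : ((n : ℝ)⁻¹ • ∑ j, X (t + 1) j) k = (n : ℝ)⁻¹ * (∑ j, X (t + 1) j) k := by
        simp
      have hs : (∑ j, X (t + 1) j) k = ∑ i, X (t + 1) i k := by
        rw [WithLp.ofLp_sum]; exact Finset.sum_apply k _ _
      have h2 : ∑ i, X (t + 1) i k = ∑ j, (X t j k - ηt t * Zhat t j k) := by
        rw [Finset.sum_congr rfl fun i _ => hXapp t i k, Finset.sum_comm]
        refine Finset.sum_congr rfl fun j _ => ?_
        rw [← Finset.sum_mul, hcol j, one_mul]
      rw [hap, hs, h2, inv_mul_eq_div]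
    -- per-coordinate contraction
    have hk : ∀ k : Fin d,
        ∑ i, (X (t + 1) i k - ((n : ℝ)⁻¹ • ∑ j, X (t + 1) j) k) ^ 2
          ≤ ρ ^ 2 * ∑ j, ((X t j - (n : ℝ)⁻¹ • ∑ l, X t l - ηt t • Zhat t j) k) ^ 2 := by
      intro k
      set a : EuclideanSpace ℝ (Fin n) :=
        WithLp.toLp 2 (fun j => (X t j - (n : ℝ)⁻¹ • ∑ l, X t l - ηt t • Zhat t j) k) with ha
      have haj : ∀ j, a j = (X t j k - ηt t * Zhat t j k) - ((n : ℝ)⁻¹ • ∑ l, X t l) k := by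
        intro j
        rw [ha]
        show (X t j - (n : ℝ)⁻¹ • ∑ l, X t l - ηt t • Zhat t j) k = _
        have : (X t j - (n : ℝ)⁻¹ • ∑ l, X t l - ηt t • Zhat t j) k
            = X t j k - ((n : ℝ)⁻¹ • ∑ l, X t l) k - ηt t * Zhat t j k := by simp
        rw [this]; ring
      have hs := hspec a
      set b : EuclideanSpace ℝ (Fin n) :=
        WithLp.toLp 2 (fun i => X (t + 1) i k - ((n : ℝ)⁻¹ • ∑ j, X (t + 1) j) k) with hbdef
      have hb : (show EuclideanSpace ℝ (Fin n) from
          WithLp.toLp 2 (fun i => (∑ j, W i j * a j) - (∑ j, a j) / n)) = b := by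
        ext i
        rw [hbdef]
        show (∑ j, W i j * a j) - (∑ j, a j) / n
            = X (t + 1) i k - ((n : ℝ)⁻¹ • ∑ j, X (t + 1) j) k
        have e1 : ∑ j, W i j * a j
            = X (t + 1) i k - ((n : ℝ)⁻¹ • ∑ l, X t l) k := by
          rw [Finset.sum_congr rfl fun j _ => by rw [haj j, mul_sub]]
          rw [Finset.sum_sub_distrib, ← Finset.sum_mul, hWrow i, one_mul, hXapp t i k]
        have e2 : (∑ j, a j)
            = (∑ j, (X t j k - ηt t * Zhat t j k)) - n * ((n : ℝ)⁻¹ • ∑ l, X t l) k := by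
          rw [Finset.sum_congr rfl fun j _ => haj j, Finset.sum_sub_distrib,
            Finset.sum_const, Finset.card_univ, Fintype.card_fin, nsmul_eq_mul]
        rw [e1, e2, hmean k]
        field_simp
        ring
      rw [hb] at hs
      calc ∑ i, (X (t + 1) i k - ((n : ℝ)⁻¹ • ∑ j, X (t + 1) j) k) ^ 2
          = ‖b‖ ^ 2 := by rw [eucl_norm_sq b]
        _ ≤ (ρ * ‖a‖) ^ 2 := pow_le_pow_left₀ (norm_nonneg _) hs 2
        _ = ρ ^ 2 * ∑ j, a j ^ 2 := by rw [mul_pow, eucl_norm_sq a]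
        _ = ρ ^ 2 * ∑ j, ((X t j - (n : ℝ)⁻¹ • ∑ l, X t l - ηt t • Zhat t j) k) ^ 2 := by
            simp only [ha, PiLp.toLp_apply]
    -- matrix-level contraction
    have key : (∑ i, ‖X (t + 1) i - (n : ℝ)⁻¹ • ∑ j, X (t + 1) j‖ ^ 2)
        ≤ ρ ^ 2 * ∑ j, ‖X t j - (n : ℝ)⁻¹ • ∑ l, X t l - ηt t • Zhat t j‖ ^ 2 := by
      have lhs_eq : ∑ i, ‖X (t + 1) i - (n : ℝ)⁻¹ • ∑ j, X (t + 1) j‖ ^ 2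
          = ∑ k, ∑ i, (X (t + 1) i k - ((n : ℝ)⁻¹ • ∑ j, X (t + 1) j) k) ^ 2 := by
        rw [Finset.sum_congr rfl fun i _ => eucl_norm_sq _, Finset.sum_comm]
        refine Finset.sum_congr rfl fun k _ => Finset.sum_congr rfl fun i _ => ?_
        congr 1
      have rhs_eq : ∑ j, ‖X t j - (n : ℝ)⁻¹ • ∑ l, X t l - ηt t • Zhat t j‖ ^ 2
          = ∑ j, ∑ k, ((X t j - (n : ℝ)⁻¹ • ∑ l, X t l - ηt t • Zhat t j) k) ^ 2 :=
        Finset.sum_congr rfl fun j _ => eucl_norm_sq _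
      rw [lhs_eq, rhs_eq]
      calc ∑ k : Fin d, ∑ i, (X (t + 1) i k - ((n : ℝ)⁻¹ • ∑ j, X (t + 1) j) k) ^ 2
          ≤ ∑ k : Fin d, ρ ^ 2 *
              ∑ j, ((X t j - (n : ℝ)⁻¹ • ∑ l, X t l - ηt t • Zhat t j) k) ^ 2 :=
            Finset.sum_le_sum fun k _ => hk k
        _ = ρ ^ 2 * ∑ k : Fin d,
              ∑ j, ((X t j - (n : ℝ)⁻¹ • ∑ l, X t l - ηt t • Zhat t j) k) ^ 2 := by
            rw [Finset.mul_sum]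
        _ = ρ ^ 2 * ∑ j, ∑ k : Fin d,
              ((X t j - (n : ℝ)⁻¹ • ∑ l, X t l - ηt t • Zhat t j) k) ^ 2 := by
            rw [Finset.sum_comm]
    -- Minkowski-type bound on the RHS
    set F : ℝ := ∑ i, ‖X t i - (n : ℝ)⁻¹ • ∑ j, X t j‖ ^ 2 with hF
    have hFnn' : (0:ℝ) ≤ F := Finset.sum_nonneg fun i _ => sq_nonneg _
    have hZ2 : ∑ j, ‖Zhat t j‖ ^ 2 ≤ (n:ℝ) := by
      calc ∑ j, ‖Zhat t j‖ ^ 2 ≤ ∑ _j : Fin n, (1:ℝ) :=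
            Finset.sum_le_sum fun j _ => by nlinarith [hZhat t j, norm_nonneg (Zhat t j)]
        _ = n := by simp
    have hZ2nn : (0:ℝ) ≤ ∑ j, ‖Zhat t j‖ ^ 2 := Finset.sum_nonneg fun j _ => sq_nonneg _
    have hCS : ∑ j, ‖X t j - (n : ℝ)⁻¹ • ∑ l, X t l‖ * ‖Zhat t j‖
        ≤ Real.sqrt F * Real.sqrt n := by
      have h1 : (∑ j, ‖X t j - (n : ℝ)⁻¹ • ∑ l, X t l‖ * ‖Zhat t j‖) ^ 2
          ≤ (∑ j, ‖X t j - (n : ℝ)⁻¹ • ∑ l, X t l‖ ^ 2) * ∑ j, ‖Zhat t j‖ ^ 2 :=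
        Finset.sum_mul_sq_le_sq_mul_sq _ _ _
      have h2 : (∑ j, ‖X t j - (n : ℝ)⁻¹ • ∑ l, X t l‖ ^ 2) * (∑ j, ‖Zhat t j‖ ^ 2)
          ≤ F * n := by
        refine mul_le_mul_of_nonneg_left hZ2 ?_
        exact Finset.sum_nonneg fun j _ => sq_nonneg _
      have h3 : ∑ j, ‖X t j - (n : ℝ)⁻¹ • ∑ l, X t l‖ * ‖Zhat t j‖ ≤ Real.sqrt (F * n) := by
        rw [← Real.sqrt_sq (Finset.sum_nonneg fun j _ =>
          mul_nonneg (norm_nonneg _) (norm_nonneg _))]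
        exact Real.sqrt_le_sqrt (h1.trans h2)
      rwa [Real.sqrt_mul hFnn'] at h3
    have hG : ∑ j, ‖X t j - (n : ℝ)⁻¹ • ∑ l, X t l - ηt t • Zhat t j‖ ^ 2
        ≤ (Real.sqrt F + ηt t * Real.sqrt n) ^ 2 := by
      have hnorm : ∀ j, ‖X t j - (n : ℝ)⁻¹ • ∑ l, X t l - ηt t • Zhat t j‖
          ≤ ‖X t j - (n : ℝ)⁻¹ • ∑ l, X t l‖ + ηt t * ‖Zhat t j‖ := by
        intro j
        refine (norm_sub_le _ _).trans ?_
        rw [norm_smul, Real.norm_eq_abs, abs_of_nonneg (hη t)]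
      have hb1 : ∑ j, ‖X t j - (n : ℝ)⁻¹ • ∑ l, X t l - ηt t • Zhat t j‖ ^ 2
          ≤ ∑ j, (‖X t j - (n : ℝ)⁻¹ • ∑ l, X t l‖ + ηt t * ‖Zhat t j‖) ^ 2 :=
        Finset.sum_le_sum fun j _ => pow_le_pow_left₀ (norm_nonneg _) (hnorm j) 2
      have expand : ∑ j, (‖X t j - (n : ℝ)⁻¹ • ∑ l, X t l‖ + ηt t * ‖Zhat t j‖) ^ 2
          = F + (2 * ηt t) * (∑ j, ‖X t j - (n : ℝ)⁻¹ • ∑ l, X t l‖ * ‖Zhat t j‖)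
            + ηt t ^ 2 * ∑ j, ‖Zhat t j‖ ^ 2 := by
        rw [Finset.sum_congr rfl fun j _ => show
          (‖X t j - (n : ℝ)⁻¹ • ∑ l, X t l‖ + ηt t * ‖Zhat t j‖) ^ 2
            = ‖X t j - (n : ℝ)⁻¹ • ∑ l, X t l‖ ^ 2
              + (2 * ηt t) * (‖X t j - (n : ℝ)⁻¹ • ∑ l, X t l‖ * ‖Zhat t j‖)
              + ηt t ^ 2 * ‖Zhat t j‖ ^ 2 from by ring]
        rw [Finset.sum_add_distrib, Finset.sum_add_distrib, ← Finset.mul_sum, ← Finset.mul_sum]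
      have hsq : Real.sqrt F ^ 2 = F := Real.sq_sqrt hFnn'
      have hsqn : Real.sqrt n ^ 2 = (n:ℝ) := Real.sq_sqrt hn'.le
      nlinarith [hb1, expand, hCS, hZ2, hη t, sq_nonneg (ηt t),
        Real.sqrt_nonneg F, Real.sqrt_nonneg (n:ℝ)]
    -- combine
    have hF' : (1 / (n : ℝ)) * ∑ i, ‖X (t+1) i - (n : ℝ)⁻¹ • ∑ j, X (t+1) j‖ ^ 2
        ≤ (ρ * (e t + ηt t)) ^ 2 := by
      have h2 : (∑ i, ‖X (t + 1) i - (n : ℝ)⁻¹ • ∑ j, X (t + 1) j‖ ^ 2)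
          ≤ ρ ^ 2 * (Real.sqrt F + ηt t * Real.sqrt n) ^ 2 :=
        key.trans (mul_le_mul_of_nonneg_left hG (sq_nonneg ρ))
      have hsf : Real.sqrt F = e t * Real.sqrt n := by
        rw [he_def]
        show Real.sqrt F = Real.sqrt ((1 / (n : ℝ)) * F) * Real.sqrt n
        rw [← Real.sqrt_mul (by positivity) (n:ℝ)]
        congr 1
        field_simp
      have hsqn : Real.sqrt n * Real.sqrt n = (n:ℝ) := Real.mul_self_sqrt hn'.le
      have hsn : 0 < Real.sqrt n := Real.sqrt_pos.mpr hn'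
      rw [hsf] at h2
      have : (e t * Real.sqrt n + ηt t * Real.sqrt n) ^ 2 = (n:ℝ) * (e t + ηt t) ^ 2 := by
        have : (e t * Real.sqrt n + ηt t * Real.sqrt n) ^ 2
            = (Real.sqrt n * Real.sqrt n) * (e t + ηt t) ^ 2 := by ring
        rw [this, hsqn]
      rw [this] at h2
      rw [div_mul_eq_mul_div, one_mul, div_le_iff₀ hn']
      exact h2.trans (le_of_eq (by ring))
    have := Real.sqrt_le_sqrt hF'
    rw [Real.sqrt_sq (mul_nonneg hρ0 (add_nonneg (hen t) (hη t)))] at this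
    exact this
  refine ⟨?_, ?_⟩
  · intro T _
    calc ∑ t ∈ Finset.range T, (1 / (n : ℝ)) * ∑ i, ‖X t i - (n : ℝ)⁻¹ • ∑ j, X t j‖ ^ 2
        = ∑ t ∈ Finset.range T, e t ^ 2 :=
          Finset.sum_congr rfl fun t _ => (Real.sq_sqrt (hFnn t)).symm
      _ ≤ rhoTilde ρ * ∑ t ∈ Finset.range T, ηt t ^ 2 :=
          aux_sq ρ hρ0 hρ1 e ηt he0 hen hη hrec T
  · intro αt hα0 hα1 hαd t
    exact aux_lin ρ hρ0 hρ1 e ηt αt he0 hen hη hα0 hαd hrec (t + 1)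
end
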